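/- Let F be a field, p a monic irreducible and separable polynomial of degree s over F, let α_1 ≥ α_2 ≥ … ≥ α_m ≥ 1 be integers, and let G = diag(G_1,…,G_m) where G_i is the generalized Jordan block of the first kind of size α_i associated with p. Suppose X is a square matrix over F commuting with G, and partition X into blocks X_{i,j} of size sα_i × sα_j for i,j = 1,…,m conformally with the block structure of G. Then for all i,j: (1) if α_i = α_j then X_{i,j} commutes with G_i; (2) if α_i < α_j then the last s(α_j - α_i) columns of X_{i,j} are zero and the left sα_i × sα_i submatrix of X_{i,j} commutes with G_i; (3) if α_i > α_j then the first s(α_i - α_j) rows of X_{i,j} are zero and the bottom sα_j × sα_j submatrix of X_{i,j} commutes with G_j. -/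

import Mathlib

open Matrix Polynomial

/-- The companion matrix of a monic polynomial `p` of degree `n`:
ones on the first subdiagonal, `-(coefficients of p)` in the last column. -/
def companionMat (F : Type*) [Field F] (n : ℕ) (p : Polynomial F) :
    Matrix (Fin n) (Fin n) F :=
  Matrix.of fun i j =>
    if (j : ℕ) = n - 1 then -p.coeff (i : ℕ)
    else if (i : ℕ) = (j : ℕ) + 1 then 1 else 0

/-- The generalized Jordan block of the first kind of size `ℓ` associated with `p`
(degree `s`): the `sℓ × sℓ` block matrix with `ℓ` diagonal `s×s` blocks equal to the
companion matrix `C` of `p`, identity `s×s` blocks directly below the diagonal, and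
zeros elsewhere. Rows/columns indexed by `Fin ℓ × Fin s`. -/
def genJordanBlockOne (F : Type*) [Field F] (s ℓ : ℕ) (p : Polynomial F) :
    Matrix (Fin ℓ × Fin s) (Fin ℓ × Fin s) F :=
  Matrix.of fun x y =>
    if x.1 = y.1 then companionMat F s p x.2 y.2
    else if (x.1 : ℕ) = (y.1 : ℕ) + 1 then (1 : Matrix (Fin s) (Fin s) F) x.2 y.2
    else 0


/-- The generalized Jordan form of the first kind `diag(G_1, …, G_m)` where `G_i` is
the generalized Jordan block of the first kind of size `α i` associated with `p`.
Rows/columns are indexed by `Σ i : Fin m, Fin (α i) × Fin s`. -/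
def genJordanFormOne (F : Type*) [Field F] (s m : ℕ) (α : Fin m → ℕ)
    (p : Polynomial F) :
    Matrix (Σ i : Fin m, Fin (α i) × Fin s) (Σ i : Fin m, Fin (α i) × Fin s) F :=
  Matrix.of fun x y =>
    if x.1 = y.1 then
      (if (x.2.1 : ℕ) = (y.2.1 : ℕ) then companionMat F s p x.2.2 y.2.2
       else if (x.2.1 : ℕ) = (y.2.1 : ℕ) + 1 then
         (1 : Matrix (Fin s) (Fin s) F) x.2.2 y.2.2
       else 0)
    else 0

namespace CentralizerAux
variable {F : Type*} [Field F] (p : Polynomial F)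

local notation "s" => p.natDegree
local notation "C₀" => companionMat F p.natDegree p

lemma companion_mulVec_single (k : Fin s) (hk : (k:ℕ)+1 < s) :
    C₀ *ᵥ Pi.single k 1 = Pi.single (⟨(k:ℕ)+1, hk⟩ : Fin s) 1 := by
  funext i
  simp only [Matrix.mulVec_single_one, Matrix.col_apply, companionMat, Matrix.of_apply, Pi.single_apply, mul_one]
  have hks : (k:ℕ) ≠ s - 1 := by omega
  rw [if_neg hks]
  by_cases h : (i:ℕ) = (k:ℕ)+1
  · rw [if_pos h, if_pos (Fin.ext h)]
  · rw [if_neg h, if_neg (fun hc => h (congrArg Fin.val hc))]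

lemma companion_pow_mulVec_single (hs : 0 < s) (k : ℕ) (hk : k < s) :
    (C₀ ^ k) *ᵥ Pi.single (⟨0, hs⟩ : Fin s) 1 = Pi.single (⟨k, hk⟩ : Fin s) 1 := by
  induction k with
  | zero =>
    rw [pow_zero, Matrix.one_mulVec]
  | succ k ih =>
    have hk' : k < s := by omega
    rw [pow_succ', ← Matrix.mulVec_mulVec, ih hk',
      companion_mulVec_single p ⟨k, hk'⟩ hk]


lemma companion_mulVec_last (hs : 0 < s) :
    C₀ *ᵥ Pi.single (⟨s - 1, by omega⟩ : Fin s) 1 = fun i : Fin s => -p.coeff (i:ℕ) := by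
  funext i
  simp [Matrix.mulVec_single, companionMat, Matrix.of_apply]

lemma sum_single_coeff (c : Fin s → F) :
    ∑ k : Fin s, c k • (Pi.single k 1 : Fin s → F) = fun w => c w := by
  funext w
  rw [Finset.sum_apply]
  simp only [Pi.smul_apply, Pi.single_apply, smul_eq_mul]
  simp [Finset.sum_ite_eq]

lemma aeval_sum_monomial_mulVec (hs : 0 < s) (c : ℕ → F) :
    (aeval C₀ (∑ i ∈ Finset.range s, monomial i (c i))) *ᵥ Pi.single (⟨0, hs⟩ : Fin s) 1
      = fun w : Fin s => c (w : ℕ) := by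
  rw [map_sum]
  rw [show (∑ x ∈ Finset.range s, (aeval C₀) (monomial x (c x))) *ᵥ
        Pi.single (⟨0, hs⟩ : Fin s) 1
      = ∑ x ∈ Finset.range s, ((aeval C₀) (monomial x (c x))) *ᵥ
        Pi.single (⟨0, hs⟩ : Fin s) 1 by
    funext w
    simp only [Matrix.mulVec_single_one, Matrix.col_apply, mul_one, Finset.sum_apply, Matrix.sum_apply]]
  have key : ∀ i ∈ Finset.range s, (aeval C₀ (monomial i (c i))) *ᵥ
      Pi.single (⟨0, hs⟩ : Fin s) 1
      = fun w : Fin s => if (w : ℕ) = i then c i else 0 := by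
    intro i hi
    rw [aeval_monomial, ← Algebra.smul_def, Matrix.smul_mulVec,
      companion_pow_mulVec_single p hs i (Finset.mem_range.mp hi)]
    funext w
    simp only [Pi.smul_apply, Pi.single_apply, smul_eq_mul, mul_ite, mul_one, mul_zero]
    congr 1
    simp [Fin.ext_iff]
  rw [Finset.sum_congr rfl key]
  funext w
  rw [Finset.sum_apply]
  rw [Finset.sum_eq_single (w : ℕ)]
  · rw [if_pos rfl]
  · intro b _ hb
    exact if_neg fun hc : (w:ℕ) = b => hb hc.symm
  · intro h; exact absurd (Finset.mem_range.mpr w.isLt) h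

lemma aeval_commute_pow (g : Polynomial F) (k : ℕ) :
    aeval C₀ g * C₀ ^ k = C₀ ^ k * aeval C₀ g := by
  calc aeval C₀ g * C₀ ^ k = aeval C₀ (g * X ^ k) := by
        rw [_root_.map_mul, aeval_X_pow]
  _ = aeval C₀ (X ^ k * g) := by rw [mul_comm]
  _ = C₀ ^ k * aeval C₀ g := by rw [_root_.map_mul, aeval_X_pow]

lemma ext_of_mulVec_single (A B : Matrix (Fin s) (Fin s) F)
    (h : ∀ j : Fin s, A *ᵥ Pi.single j 1 = B *ᵥ Pi.single j 1) : A = B := by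
  ext i j
  have := congrFun (h j) i
  simpa using this

lemma aeval_companion (hmonic : p.Monic) : aeval C₀ p = 0 := by
  rcases Nat.eq_zero_or_pos s with hs | hs
  · apply Matrix.ext; intro i; exact absurd i.isLt (by omega)
  suffices hmain : (aeval C₀ p) *ᵥ Pi.single (⟨0, hs⟩ : Fin s) 1 = 0 by
    apply ext_of_mulVec_single
    intro j
    rcases j with ⟨k, hk⟩
    rw [show (Pi.single (⟨k, hk⟩ : Fin s) 1 : Fin s → F) =
        C₀ ^ k *ᵥ Pi.single (⟨0, hs⟩ : Fin s) 1 from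
      (companion_pow_mulVec_single p hs k hk).symm]
    rw [Matrix.mulVec_mulVec, aeval_commute_pow, ← Matrix.mulVec_mulVec, hmain,
      Matrix.mulVec_zero, Matrix.zero_mulVec]
  rw [show aeval C₀ p = aeval C₀ (X ^ s +
      ∑ i ∈ Finset.range s, Polynomial.C (p.coeff i) * X ^ i) from
    congrArg _ hmonic.as_sum]
  simp_rw [C_mul_X_pow_eq_monomial]
  rw [map_add, Matrix.add_mulVec, aeval_sum_monomial_mulVec p hs]
  rw [map_pow, aeval_X]
  have hpow : C₀ ^ s *ᵥ Pi.single (⟨0, hs⟩ : Fin s) 1 = fun i : Fin s => -p.coeff (i:ℕ) := by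
    have h1 : C₀ ^ s = C₀ * C₀ ^ (s-1) := by
      rw [← pow_succ']
      congr 1
      omega
    rw [h1, ← Matrix.mulVec_mulVec, companion_pow_mulVec_single p hs (s-1) (by omega),
      companion_mulVec_last p hs]
  rw [hpow]
  funext w
  simp

lemma commutes_poly (Z : Matrix (Fin s) (Fin s) F) (hZ : C₀ * Z = Z * C₀) :
    ∃ q : Polynomial F, Z = aeval C₀ q := by
  rcases Nat.eq_zero_or_pos s with hs | hs
  · exact ⟨0, by apply Matrix.ext; intro i; exact absurd i.isLt (by omega)⟩
  set e0 : Fin s → F := Pi.single (⟨0, hs⟩ : Fin s) 1 with he0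
  set c : ℕ → F := fun k => if h : k < s then (Z *ᵥ e0) ⟨k, h⟩ else 0 with hc
  refine ⟨∑ i ∈ Finset.range s, monomial i (c i), ?_⟩
  apply ext_of_mulVec_single
  intro j
  rcases j with ⟨k, hk⟩
  rw [show (Pi.single (⟨k, hk⟩ : Fin s) 1 : Fin s → F) =
      C₀ ^ k *ᵥ e0 from (companion_pow_mulVec_single p hs k hk).symm]
  rw [Matrix.mulVec_mulVec, Matrix.mulVec_mulVec,
    show Z * C₀ ^ k = C₀ ^ k * Z from ((Commute.pow_left hZ k).symm),
    aeval_commute_pow, ← Matrix.mulVec_mulVec, ← Matrix.mulVec_mulVec]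
  have hinner : (Z *ᵥ e0) = fun w : Fin s => c (w : ℕ) := by
    funext w
    rw [hc]
    simp only [dif_pos w.isLt, Fin.eta]
  rw [aeval_sum_monomial_mulVec p hs c, hinner]

lemma trace_aeval_bracket (g : Polynomial F) (W : Matrix (Fin s) (Fin s) F) :
    ((aeval C₀ g) * (C₀ * W - W * C₀)).trace = 0 := by
  have hcomm : aeval C₀ g * C₀ = C₀ * aeval C₀ g := by
    simpa using aeval_commute_pow p g 1
  rw [mul_sub, Matrix.trace_sub, ← mul_assoc, ← mul_assoc]
  rw [Matrix.trace_mul_comm (aeval C₀ g * W) C₀, ← mul_assoc, ← hcomm]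
  rw [sub_self]

theorem ker_inter_im (hmonic : p.Monic) (hirr : Irreducible p) (hsep : p.Separable)
    (Z W : Matrix (Fin s) (Fin s) F) (h1 : C₀ * Z = Z * C₀) (hbr : Z = C₀ * W - W * C₀) :
    Z = 0 := by
  haveI : Fact (Irreducible p) := ⟨hirr⟩
  have hs : 0 < s := natDegree_pos_iff_degree_pos.mpr (degree_pos_of_irreducible hirr)
  obtain ⟨q, hq⟩ := commutes_poly p Z h1
  by_contra hZ0
  set K := AdjoinRoot p with hK
  set pb : PowerBasis F K := ⟨AdjoinRoot.root p, p.natDegree, AdjoinRoot.powerBasisAux' hmonic,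
    (AdjoinRoot.powerBasis' hmonic).basis_eq_pow⟩ with hpb
  haveI : FiniteDimensional F K := pb.finite
  have hroots : (AdjoinRoot.root p)^s = ∑ w : Fin s, (-p.coeff (w:ℕ)) • pb.basis w := by
    have h0 : (0 : K) = (AdjoinRoot.root p)^s
        + ∑ i ∈ Finset.range s, p.coeff i • (AdjoinRoot.root p)^i := by
      have := congrArg (aeval (AdjoinRoot.root p)) hmonic.as_sum
      rw [AdjoinRoot.aeval_eq, AdjoinRoot.mk_self] at this
      rw [this, map_add, map_pow, aeval_X, map_sum]
      congr 1
      refine Finset.sum_congr rfl fun i _ => ?_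
      rw [_root_.map_mul, aeval_C, map_pow, aeval_X, Algebra.smul_def]
    have h1 : ∑ i ∈ Finset.range s, p.coeff i • (AdjoinRoot.root p)^i
        = ∑ w : Fin s, p.coeff (w:ℕ) • pb.basis w := by
      rw [← Fin.sum_univ_eq_sum_range (fun i => p.coeff i • (AdjoinRoot.root p)^i) s]
      refine Finset.sum_congr rfl fun w _ => ?_
      rw [pb.basis_eq_pow w]
    rw [h1] at h0
    have := congrArg (fun z => z - ∑ w : Fin s, p.coeff (w:ℕ) • pb.basis w) h0
    simp only [zero_sub, add_sub_cancel_right] at this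
    rw [← this, ← Finset.sum_neg_distrib]
    refine Finset.sum_congr rfl fun w _ => ?_
    rw [neg_smul]
  have hC : Algebra.leftMulMatrix pb.basis (AdjoinRoot.root p) = C₀ := by
    ext i j
    rw [Algebra.leftMulMatrix_eq_repr_mul, pb.basis_eq_pow, show pb.gen = AdjoinRoot.root p from rfl, ← pow_succ']
    have hjlt : (j:ℕ) < s := j.isLt
    by_cases hj : (j:ℕ) + 1 < s
    · rw [show (AdjoinRoot.root p) ^ ((j:ℕ)+1) = pb.basis ⟨(j:ℕ)+1, hj⟩ from
        (pb.basis_eq_pow ⟨(j:ℕ)+1, hj⟩).symm]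
      rw [pb.basis.repr_self, Finsupp.single_apply]
      rw [companionMat, Matrix.of_apply, if_neg (by omega : ¬ (j:ℕ) = s - 1)]
      by_cases h : (i:ℕ) = (j:ℕ) + 1
      · rw [if_pos h, if_pos (by exact Fin.ext h.symm)]
      · rw [if_neg h, if_neg (fun hc => h (congrArg Fin.val hc).symm)]
    · have hj' : (j:ℕ) + 1 = s := by omega
      rw [hj', hroots, map_sum]
      have : ∀ w : Fin s, (pb.basis.repr ((-p.coeff (w:ℕ)) • pb.basis w)) i
          = if w = i then -p.coeff (w:ℕ) else 0 := by
        intro w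
        rw [_root_.map_smul, pb.basis.repr_self, Finsupp.smul_single, smul_eq_mul, mul_one,
          Finsupp.single_apply]
      rw [Finsupp.finset_sum_apply]
      rw [Finset.sum_congr rfl fun w _ => this w]
      rw [Finset.sum_ite_eq']
      rw [if_pos (Finset.mem_univ i)]
      rw [companionMat, Matrix.of_apply, if_pos (by omega : (j:ℕ) = s - 1)]
  have hΨ : ∀ g : Polynomial F, aeval C₀ g
      = Algebra.leftMulMatrix pb.basis (aeval (AdjoinRoot.root p) g) := by
    intro g
    rw [← hC]
    exact Polynomial.aeval_algHom_apply (Algebra.leftMulMatrix pb.basis)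
      (AdjoinRoot.root p) g
  have htrace : ∀ g : Polynomial F,
      (aeval C₀ g).trace = Algebra.trace F K (AdjoinRoot.mk p g) := by
    intro g
    rw [hΨ g, ← Algebra.trace_eq_matrix_trace pb.basis, AdjoinRoot.aeval_eq]
  have hmin : minpoly F (AdjoinRoot.root p) = p := by
    rw [AdjoinRoot.minpoly_root hmonic.ne_zero, hmonic.leadingCoeff, inv_one]
    simp
  have hroot : IsSeparable F (AdjoinRoot.root p) := by
    unfold IsSeparable
    rw [hmin]
    exact hsep
  haveI h2 : Algebra.IsSeparable F (IntermediateField.adjoin F {AdjoinRoot.root p}) :=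
    (IntermediateField.isSeparable_adjoin_simple_iff_isSeparable F K).mpr hroot
  haveI h3 : Algebra.IsSeparable F (⊤ : IntermediateField F K) := by
    rw [← IntermediateField.adjoin_root_eq_top p]
    exact h2
  haveI h4 : Algebra.IsSeparable F K :=
    AlgEquiv.Algebra.isSeparable (IntermediateField.topEquiv (F := F) (E := K))
  have hy : AdjoinRoot.mk p q = 0 := by
    apply (traceForm_nondegenerate F K).1 (AdjoinRoot.mk p q)
    intro w
    obtain ⟨g, rfl⟩ := AdjoinRoot.mk_surjective w
    rw [Algebra.traceForm_apply, ← _root_.map_mul, ← htrace (q * g), _root_.map_mul,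
      ← hq, Matrix.trace_mul_comm, hbr]
    exact trace_aeval_bracket p g W
  rw [AdjoinRoot.mk_eq_zero] at hy
  obtain ⟨t, rfl⟩ := hy
  rw [_root_.map_mul, aeval_companion p hmonic, zero_mul] at hq
  exact hZ0 hq

end CentralizerAux

section Vlemma
variable {R : Type*} [CommRing R] {n : ℕ}

lemma chain_vanish (D : Matrix (Fin n) (Fin n) R)
    (hD : ∀ Z W : Matrix (Fin n) (Fin n) R, D * Z = Z * D → Z = D * W - W * D → Z = 0)
    (r c : ℕ) (Y : ℕ → ℕ → Matrix (Fin n) (Fin n) R)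
    (hzero : ∀ a b, r ≤ a ∨ c ≤ b → Y a b = 0)
    (hrel : ∀ a b, a < r → b < c →
      Y a b * D + Y a (b+1) = D * Y a b + (if a = 0 then 0 else Y (a-1) b)) :
    ∀ a b, a < b → Y a b = 0 := by
  suffices H : ∀ a, (∀ a' b, a' < a → a' < b → Y a' b = 0) →
      (∀ b, a ≤ b → (D * Y a b = Y a b * D ∧ (a < b → Y a b = 0))) by
    intro a
    induction a using Nat.strong_induction_on with
    | _ a IH =>
      intro b hab
      exact (H a (fun a' b' ha' hb' => IH a' ha' b' hb') b (le_of_lt hab)).2 hab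
  intro a IH
  suffices Q : ∀ t b, c - b ≤ t → a ≤ b →
      (D * Y a b = Y a b * D ∧ (a < b → Y a b = 0)) by
    intro b hab
    exact Q (c - b) b le_rfl hab
  intro t
  induction t with
  | zero =>
    intro b hcb _
    rw [hzero a b (Or.inr (by omega))]
    exact ⟨by simp, fun _ => rfl⟩
  | succ t iht =>
    intro b hcb hab
    by_cases har : a < r
    case neg =>
      rw [hzero a b (Or.inl (by omega))]
      exact ⟨by simp, fun _ => rfl⟩
    by_cases hbc : b < c
    case neg =>
      rw [hzero a b (Or.inr (by omega))]
      exact ⟨by simp, fun _ => rfl⟩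
    have hnext := iht (b+1) (by omega) (by omega)
    have hprev : (if a = 0 then 0 else Y (a-1) b) = (0 : Matrix (Fin n) (Fin n) R) := by
      by_cases ha0 : a = 0
      · rw [if_pos ha0]
      · rw [if_neg ha0]
        exact IH (a-1) b (by omega) (by omega)
    have hrel1 := hrel a b har hbc
    rw [hprev, add_zero] at hrel1
    have hbr : Y a (b+1) = D * Y a b - Y a b * D := eq_sub_of_add_eq' hrel1
    have hz1 : Y a (b+1) = 0 := hD _ _ hnext.1 hbr
    rw [hz1, add_zero] at hrel1
    refine ⟨hrel1.symm, fun hament => ?_⟩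
    have hrel2 := hrel a (b-1) har (by omega)
    have hprev2 : (if a = 0 then 0 else Y (a-1) (b-1)) = (0 : Matrix (Fin n) (Fin n) R) := by
      by_cases ha0 : a = 0
      · rw [if_pos ha0]
      · rw [if_neg ha0]
        exact IH (a-1) (b-1) (by omega) (by omega)
    rw [hprev2, add_zero, show b - 1 + 1 = b by omega] at hrel2
    exact hD _ _ hrel1.symm (eq_sub_of_add_eq' hrel2)

lemma chain_vanish' (D : Matrix (Fin n) (Fin n) R)
    (hD : ∀ Z W : Matrix (Fin n) (Fin n) R, D * Z = Z * D → Z = D * W - W * D → Z = 0)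
    (r c : ℕ) (Y : ℕ → ℕ → Matrix (Fin n) (Fin n) R)
    (hzero : ∀ a b, r ≤ a ∨ c ≤ b → Y a b = 0)
    (hrel : ∀ a b, a < r → b < c →
      Y a b * D + Y a (b+1) = D * Y a b + (if a = 0 then 0 else Y (a-1) b)) :
    ∀ a b, a + c < b + r → Y a b = 0 := by
  intro a b hab
  by_cases hin : a < r ∧ b < c
  case neg => exact hzero a b (by omega)
  obtain ⟨har, hbc⟩ := hin
  set Y' : ℕ → ℕ → Matrix (Fin n) (Fin n) R := fun a' b' =>
    if a' < c ∧ b' < r then (Y (r-1-b') (c-1-a'))ᵀ else 0 with hY'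
  have hDT : ∀ Z W : Matrix (Fin n) (Fin n) R, Dᵀ * Z = Z * Dᵀ → Z = Dᵀ * W - W * Dᵀ → Z = 0 := by
    intro Z W hZW hZb
    have h1 : D * Zᵀ = Zᵀ * D := by
      have := congrArg Matrix.transpose hZW
      rw [Matrix.transpose_mul, Matrix.transpose_mul, Matrix.transpose_transpose] at this
      exact this.symm
    have h2 : Zᵀ = D * (-Wᵀ) - (-Wᵀ) * D := by
      have := congrArg Matrix.transpose hZb
      rw [Matrix.transpose_sub, Matrix.transpose_mul, Matrix.transpose_mul,
        Matrix.transpose_transpose] at this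
      rw [this]
      noncomm_ring
    have h3 := hD _ _ h1 h2
    calc Z = Zᵀᵀ := (Matrix.transpose_transpose Z).symm
    _ = 0 := by rw [h3]; exact Matrix.transpose_zero
  have hzero' : ∀ a' b', c ≤ a' ∨ r ≤ b' → Y' a' b' = 0 := by
    intro a' b' h
    rw [hY']
    exact if_neg (by omega)
  have hrel' : ∀ a' b', a' < c → b' < r →
      Y' a' b' * Dᵀ + Y' a' (b'+1) = Dᵀ * Y' a' b' + (if a' = 0 then 0 else Y' (a'-1) b') := by
    intro a' b' ha' hb'
    have h0 := hrel (r-1-b') (c-1-a') (by omega) (by omega)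
    have h0t := congrArg Matrix.transpose h0
    simp only [Matrix.transpose_add, Matrix.transpose_mul] at h0t
    have e1 : Y' a' b' = (Y (r-1-b') (c-1-a'))ᵀ := by
      rw [hY']
      exact if_pos ⟨ha', hb'⟩
    have e2 : Y' a' (b'+1) = (if r-1-b' = 0 then 0 else Y (r-1-b'-1) (c-1-a'))ᵀ := by
      by_cases hb1 : b'+1 < r
      · rw [hY']
        show (if a' < c ∧ b' + 1 < r then (Y (r-1-(b'+1)) (c-1-a'))ᵀ else 0) = _
        rw [if_pos ⟨ha', hb1⟩, if_neg (by omega), show r-1-(b'+1) = r-1-b'-1 by omega]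
      · rw [hzero' a' (b'+1) (Or.inr (by omega)), if_pos (by omega), Matrix.transpose_zero]
    have e3 : (if a' = 0 then 0 else Y' (a'-1) b') = (Y (r-1-b') (c-1-a'+1))ᵀ := by
      by_cases ha0' : a' = 0
      · rw [if_pos ha0', show c-1-a'+1 = c by omega, hzero _ c (Or.inr le_rfl),
          Matrix.transpose_zero]
      · rw [if_neg ha0', hY']
        show (if a'-1 < c ∧ b' < r then (Y (r-1-b') (c-1-(a'-1)))ᵀ else 0) = _
        rw [if_pos ⟨by omega, hb'⟩, show c-1-(a'-1) = c-1-a'+1 by omega]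
    rw [e1, e2, e3]
    -- goal should be h0t.symm modulo ite transpose
    rw [show ((if r-1-b' = 0 then 0 else Y (r-1-b'-1) (c-1-a')) :
        Matrix (Fin n) (Fin n) R)ᵀ =
      (if r-1-b' = 0 then (0 : Matrix (Fin n) (Fin n) R)ᵀ
        else (Y (r-1-b'-1) (c-1-a'))ᵀ) from apply_ite Matrix.transpose _ _ _]
    rw [Matrix.transpose_zero]
    rw [show (if r-1-b' = 0 then (0:Matrix (Fin n) (Fin n) R)
        else (Y (r-1-b'-1) (c-1-a'))ᵀ)
      = (if r-1-b' = 0 then (0:Matrix (Fin n) (Fin n) R)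
        else Y (r-1-b'-1) (c-1-a'))ᵀ by
      rw [apply_ite Matrix.transpose, Matrix.transpose_zero]]
    exact h0t.symm
  have hfin := chain_vanish Dᵀ hDT c r Y' hzero' hrel' (c-1-b) (r-1-a) (by omega)
  have hfin2 : (if c-1-b < c ∧ r-1-a < r
      then (Y (r-1-(r-1-a)) (c-1-(c-1-b)))ᵀ else 0) = 0 := hfin
  rw [if_pos ⟨by omega, by omega⟩, show r-1-(r-1-a) = a by omega,
    show c-1-(c-1-b) = b by omega] at hfin2
  calc Y a b = (Y a b)ᵀᵀ := (Matrix.transpose_transpose _).symm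
  _ = 0 := by rw [hfin2]; exact Matrix.transpose_zero

end Vlemma

namespace CentralizerAux2
variable {F : Type*} [Field F] {s : ℕ} {p : Polynomial F}

lemma fin_sum_ite {N : ℕ} (t : ℕ) (g : Fin N → F) :
    (∑ b' : Fin N, if (b' : ℕ) = t then g b' else 0)
      = if h : t < N then g ⟨t, h⟩ else 0 := by
  by_cases h : t < N
  · rw [dif_pos h, Finset.sum_eq_single (⟨t, h⟩ : Fin N)]
    · rw [if_pos rfl]
    · intro b'' _ hne
      exact if_neg (fun hc => hne (Fin.ext hc))
    · intro hmem
      exact absurd (Finset.mem_univ _) hmem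
  · rw [dif_neg h, Finset.sum_eq_zero]
    intro b'' _
    exact if_neg (fun hc : (b'' : ℕ) = t => h (hc ▸ b''.isLt))

lemma ite_sum_pull {c : Prop} [Decidable c] {g : Fin s → F} :
    (∑ w : Fin s, if c then g w else 0) = if c then ∑ w, g w else 0 := by
  split_ifs
  · rfl
  · exact Finset.sum_const_zero


lemma mulB_entry (ℓ : ℕ) (Z : Matrix (Fin ℓ × Fin s) (Fin ℓ × Fin s) F)
    (x : Fin ℓ × Fin s) (b : Fin ℓ) (v : Fin s) :
    (Z * genJordanBlockOne F s ℓ p) x (b, v)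
      = (∑ w, Z x (b, w) * companionMat F s p w v)
        + (if h : (b : ℕ) + 1 < ℓ then Z x (⟨(b : ℕ) + 1, h⟩, v) else 0) := by
  rw [Matrix.mul_apply, Fintype.sum_prod_type]
  have step1 : ∀ (b' : Fin ℓ) (w : Fin s),
      Z x (b', w) * genJordanBlockOne F s ℓ p (b', w) (b, v)
      = (if (b' : ℕ) = (b : ℕ) then Z x (b', w) * companionMat F s p w v else 0)
        + (if (b' : ℕ) = (b : ℕ) + 1 then Z x (b', w) * (if w = v then 1 else 0) else 0) := by
    intro b' w
    show Z x (b', w) * (if b' = b then companionMat F s p w v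
        else if (b' : ℕ) = (b : ℕ) + 1 then (1 : Matrix (Fin s) (Fin s) F) w v else 0) = _
    by_cases h1 : (b' : ℕ) = (b : ℕ)
    · rw [if_pos (Fin.ext h1), if_pos h1, if_neg (by omega), add_zero]
    · rw [if_neg (fun hc => h1 (congrArg Fin.val hc)), if_neg h1, zero_add]
      by_cases h2 : (b' : ℕ) = (b : ℕ) + 1
      · rw [if_pos h2, if_pos h2, Matrix.one_apply]
      · rw [if_neg h2, if_neg h2, mul_zero]
  rw [Finset.sum_congr rfl (fun b' _ => Finset.sum_congr rfl (fun w _ => step1 b' w))]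
  rw [Finset.sum_congr rfl (fun b' _ => Finset.sum_add_distrib), Finset.sum_add_distrib]
  congr 1
  · rw [Finset.sum_congr rfl (fun b' _ => ite_sum_pull), fin_sum_ite]
    rw [dif_pos b.isLt, Fin.eta]
  · rw [Finset.sum_congr rfl (fun b' _ => ite_sum_pull), fin_sum_ite]
    by_cases h : (b : ℕ) + 1 < ℓ
    · rw [dif_pos h, dif_pos h]
      simp only [mul_ite, mul_one, mul_zero]
      rw [Finset.sum_ite_eq' Finset.univ v, if_pos (Finset.mem_univ v)]
    · rw [dif_neg h, dif_neg h]

lemma Bmul_entry (ℓ : ℕ) (Z : Matrix (Fin ℓ × Fin s) (Fin ℓ × Fin s) F)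
    (a : Fin ℓ) (u : Fin s) (y : Fin ℓ × Fin s) :
    (genJordanBlockOne F s ℓ p * Z) (a, u) y
      = (∑ w, companionMat F s p u w * Z (a, w) y)
        + (if h : 0 < (a : ℕ) then Z (⟨(a : ℕ) - 1, by omega⟩, u) y else 0) := by
  rw [Matrix.mul_apply, Fintype.sum_prod_type]
  have step1 : ∀ (a' : Fin ℓ) (w : Fin s),
      genJordanBlockOne F s ℓ p (a, u) (a', w) * Z (a', w) y
      = (if (a' : ℕ) = (a : ℕ) then companionMat F s p u w * Z (a', w) y else 0)
        + (if 0 < (a : ℕ) then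
            (if (a' : ℕ) = (a : ℕ) - 1 then (if u = w then 1 else 0) * Z (a', w) y else 0)
           else 0) := by
    intro a' w
    show (if a = a' then companionMat F s p u w
        else if (a : ℕ) = (a' : ℕ) + 1 then (1 : Matrix (Fin s) (Fin s) F) u w else 0)
        * Z (a', w) y = _
    by_cases h1 : (a' : ℕ) = (a : ℕ)
    · rw [if_pos (Fin.ext h1.symm), if_pos h1]
      have hz : (if 0 < (a : ℕ) then
          (if (a' : ℕ) = (a : ℕ) - 1 then (if u = w then 1 else 0) * Z (a', w) y else 0)
          else 0) = 0 := by
        by_cases hc1 : 0 < (a : ℕ)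
        · rw [if_pos hc1, if_neg (by omega : ¬(a' : ℕ) = (a : ℕ) - 1)]
        · rw [if_neg hc1]
      rw [hz, add_zero]
    · rw [if_neg (fun hc => h1 (congrArg Fin.val hc).symm), if_neg h1, zero_add]
      by_cases h2 : (a : ℕ) = (a' : ℕ) + 1
      · rw [if_pos h2, if_pos (by omega : 0 < (a : ℕ)),
          if_pos (by omega : (a' : ℕ) = (a : ℕ) - 1), Matrix.one_apply]
      · have hz : (if 0 < (a : ℕ) then
            (if (a' : ℕ) = (a : ℕ) - 1 then (if u = w then 1 else 0) * Z (a', w) y else 0)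
            else 0) = 0 := by
          by_cases hc1 : 0 < (a : ℕ)
          · rw [if_pos hc1, if_neg (by omega : ¬(a' : ℕ) = (a : ℕ) - 1)]
          · rw [if_neg hc1]
        rw [if_neg h2, hz, zero_mul]
  rw [Finset.sum_congr rfl (fun a' _ => Finset.sum_congr rfl (fun w _ => step1 a' w))]
  rw [Finset.sum_congr rfl (fun a' _ => Finset.sum_add_distrib), Finset.sum_add_distrib]
  congr 1
  · rw [Finset.sum_congr rfl (fun a' _ => ite_sum_pull), fin_sum_ite]
    rw [dif_pos a.isLt, Fin.eta]
  · by_cases h0 : 0 < (a : ℕ)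
    · simp only [if_pos h0, dif_pos h0]
      rw [Finset.sum_congr rfl (fun a' _ => ite_sum_pull), fin_sum_ite,
        dif_pos (by omega : (a : ℕ) - 1 < ℓ)]
      simp only [ite_mul, one_mul, zero_mul]
      rw [Finset.sum_ite_eq Finset.univ u, if_pos (Finset.mem_univ u)]
    · simp only [if_neg h0, dif_neg h0, Finset.sum_const_zero]

lemma mulG_entry {m : ℕ} (α : Fin m → ℕ)
    (X : Matrix (Σ i : Fin m, Fin (α i) × Fin s) (Σ i : Fin m, Fin (α i) × Fin s) F)
    (x : Σ i : Fin m, Fin (α i) × Fin s) (j : Fin m) (b : Fin (α j)) (v : Fin s) :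
    (X * genJordanFormOne F s m α p) x ⟨j, (b, v)⟩
      = (∑ w, X x ⟨j, (b, w)⟩ * companionMat F s p w v)
        + (if h : (b : ℕ) + 1 < α j then X x ⟨j, (⟨(b:ℕ)+1, h⟩, v)⟩ else 0) := by
  rw [Matrix.mul_apply]
  rw [← Finset.univ_sigma_univ, Finset.sum_sigma]
  have hsingle : ∀ k : Fin m, k ≠ j →
      (∑ y : Fin (α k) × Fin s,
        X x ⟨k, y⟩ * genJordanFormOne F s m α p ⟨k, y⟩ ⟨j, (b, v)⟩) = 0 := by
    intro k hkj
    rw [Finset.sum_eq_zero]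
    intro y _
    have hzero : genJordanFormOne F s m α p ⟨k, y⟩ ⟨j, (b, v)⟩ = 0 := by
      show (if (⟨k, y⟩ : Σ i : Fin m, Fin (α i) × Fin s).1 = j then _ else (0:F)) = 0
      rw [if_neg hkj]
    rw [hzero, mul_zero]
  rw [Finset.sum_eq_single j (fun k _ hkj => hsingle k hkj)
    (fun hj => absurd (Finset.mem_univ j) hj)]
  rw [Fintype.sum_prod_type]
  have step1 : ∀ (b' : Fin (α j)) (w : Fin s),
      X x ⟨j, (b', w)⟩ * genJordanFormOne F s m α p ⟨j, (b', w)⟩ ⟨j, (b, v)⟩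
      = (if (b' : ℕ) = (b : ℕ) then X x ⟨j, (b', w)⟩ * companionMat F s p w v else 0)
        + (if (b' : ℕ) = (b : ℕ) + 1 then X x ⟨j, (b', w)⟩ * (if w = v then 1 else 0)
           else 0) := by
    intro b' w
    show X x ⟨j, (b', w)⟩ * (if j = j then
        (if (b' : ℕ) = (b : ℕ) then companionMat F s p w v
         else if (b' : ℕ) = (b : ℕ) + 1 then (1 : Matrix (Fin s) (Fin s) F) w v else 0)
      else 0) = _
    rw [if_pos rfl]
    by_cases h1 : (b' : ℕ) = (b : ℕ)
    · rw [if_pos h1, if_pos h1, if_neg (by omega), add_zero]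
    · rw [if_neg h1, if_neg h1, zero_add]
      by_cases h2 : (b' : ℕ) = (b : ℕ) + 1
      · rw [if_pos h2, if_pos h2, Matrix.one_apply]
      · rw [if_neg h2, if_neg h2, mul_zero]
  rw [Finset.sum_congr rfl (fun b' _ => Finset.sum_congr rfl (fun w _ => step1 b' w))]
  rw [Finset.sum_congr rfl (fun b' _ => Finset.sum_add_distrib), Finset.sum_add_distrib]
  congr 1
  · rw [Finset.sum_congr rfl (fun b' _ => ite_sum_pull), fin_sum_ite]
    rw [dif_pos b.isLt, Fin.eta]
  · rw [Finset.sum_congr rfl (fun b' _ => ite_sum_pull), fin_sum_ite]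
    by_cases h : (b : ℕ) + 1 < α j
    · rw [dif_pos h, dif_pos h]
      simp only [mul_ite, mul_one, mul_zero]
      rw [Finset.sum_ite_eq' Finset.univ v, if_pos (Finset.mem_univ v)]
    · rw [dif_neg h, dif_neg h]

lemma Gmul_entry {m : ℕ} (α : Fin m → ℕ)
    (X : Matrix (Σ i : Fin m, Fin (α i) × Fin s) (Σ i : Fin m, Fin (α i) × Fin s) F)
    (i : Fin m) (a : Fin (α i)) (u : Fin s) (y : Σ i : Fin m, Fin (α i) × Fin s) :
    (genJordanFormOne F s m α p * X) ⟨i, (a, u)⟩ y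
      = (∑ w, companionMat F s p u w * X ⟨i, (a, w)⟩ y)
        + (if h : 0 < (a : ℕ) then X ⟨i, (⟨(a : ℕ) - 1, by omega⟩, u)⟩ y else 0) := by
  rw [Matrix.mul_apply]
  rw [← Finset.univ_sigma_univ, Finset.sum_sigma]
  have hsingle : ∀ k : Fin m, k ≠ i →
      (∑ z : Fin (α k) × Fin s,
        genJordanFormOne F s m α p ⟨i, (a, u)⟩ ⟨k, z⟩ * X ⟨k, z⟩ y) = 0 := by
    intro k hki
    rw [Finset.sum_eq_zero]
    intro z _
    have hzero : genJordanFormOne F s m α p ⟨i, (a, u)⟩ ⟨k, z⟩ = 0 := by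
      show (if (⟨i, (a, u)⟩ : Σ i : Fin m, Fin (α i) × Fin s).1 = k then _ else (0:F)) = 0
      rw [if_neg (fun hc => hki hc.symm)]
    rw [hzero, zero_mul]
  rw [Finset.sum_eq_single i (fun k _ hki => hsingle k hki)
    (fun hi => absurd (Finset.mem_univ i) hi)]
  rw [Fintype.sum_prod_type]
  have step1 : ∀ (a' : Fin (α i)) (w : Fin s),
      genJordanFormOne F s m α p ⟨i, (a, u)⟩ ⟨i, (a', w)⟩ * X ⟨i, (a', w)⟩ y
      = (if (a' : ℕ) = (a : ℕ) then companionMat F s p u w * X ⟨i, (a', w)⟩ y else 0)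
        + (if 0 < (a : ℕ) then
            (if (a' : ℕ) = (a : ℕ) - 1 then (if u = w then 1 else 0) * X ⟨i, (a', w)⟩ y
             else 0)
           else 0) := by
    intro a' w
    show (if i = i then
        (if (a : ℕ) = (a' : ℕ) then companionMat F s p u w
         else if (a : ℕ) = (a' : ℕ) + 1 then (1 : Matrix (Fin s) (Fin s) F) u w else 0)
      else 0) * X ⟨i, (a', w)⟩ y = _
    rw [if_pos rfl]
    by_cases h1 : (a' : ℕ) = (a : ℕ)
    · rw [if_pos h1.symm, if_pos h1]
      have hz : (if 0 < (a : ℕ) then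
          (if (a' : ℕ) = (a : ℕ) - 1 then (if u = w then 1 else 0) * X ⟨i, (a', w)⟩ y else 0)
          else 0) = 0 := by
        by_cases hc1 : 0 < (a : ℕ)
        · rw [if_pos hc1, if_neg (by omega : ¬(a' : ℕ) = (a : ℕ) - 1)]
        · rw [if_neg hc1]
      rw [hz, add_zero]
    · rw [if_neg (fun hc => h1 hc.symm), if_neg h1, zero_add]
      by_cases h2 : (a : ℕ) = (a' : ℕ) + 1
      · rw [if_pos h2, if_pos (by omega : 0 < (a : ℕ)),
          if_pos (by omega : (a' : ℕ) = (a : ℕ) - 1), Matrix.one_apply]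
      · have hz : (if 0 < (a : ℕ) then
            (if (a' : ℕ) = (a : ℕ) - 1 then (if u = w then 1 else 0) * X ⟨i, (a', w)⟩ y else 0)
            else 0) = 0 := by
          by_cases hc1 : 0 < (a : ℕ)
          · rw [if_pos hc1, if_neg (by omega : ¬(a' : ℕ) = (a : ℕ) - 1)]
          · rw [if_neg hc1]
        rw [if_neg h2, hz, zero_mul]
  rw [Finset.sum_congr rfl (fun a' _ => Finset.sum_congr rfl (fun w _ => step1 a' w))]
  rw [Finset.sum_congr rfl (fun a' _ => Finset.sum_add_distrib), Finset.sum_add_distrib]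
  congr 1
  · rw [Finset.sum_congr rfl (fun a' _ => ite_sum_pull), fin_sum_ite]
    rw [dif_pos a.isLt, Fin.eta]
  · by_cases h0 : 0 < (a : ℕ)
    · simp only [if_pos h0, dif_pos h0]
      rw [Finset.sum_congr rfl (fun a' _ => ite_sum_pull), fin_sum_ite,
        dif_pos (by omega : (a : ℕ) - 1 < α i)]
      simp only [ite_mul, one_mul, zero_mul]
      rw [Finset.sum_ite_eq Finset.univ u, if_pos (Finset.mem_univ u)]
    · simp only [if_neg h0, dif_neg h0, Finset.sum_const_zero]

end CentralizerAux2

/-- if `X` commutes with the generalized Jordan form of the first kind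
`G = diag(G_1,…,G_m)` with Segre characteristic `α_1 ≥ … ≥ α_m ≥ 1` (`p` monic
irreducible separable of degree `s`), then each block `X_{i,j}` satisfies: if
`α_i = α_j` it commutes with `G_i`; if `α_i < α_j` its last `s(α_j-α_i)` columns
vanish and its left square submatrix commutes with `G_i`; if `α_i > α_j` its first
`s(α_i-α_j)` rows vanish and its bottom square submatrix commutes with `G_j`. -/
theorem centralizer_genJordanFormOne
    {F : Type*} [Field F] {s m : ℕ}
    (α : Fin m → ℕ) (hα : Antitone α) (hα1 : ∀ i, 1 ≤ α i)
    (p : Polynomial F) (hmonic : p.Monic) (hirr : Irreducible p)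
    (hsep : p.Separable) (hdeg : p.natDegree = s)
    (X : Matrix (Σ i : Fin m, Fin (α i) × Fin s) (Σ i : Fin m, Fin (α i) × Fin s) F)
    (hX : X * genJordanFormOne F s m α p = genJordanFormOne F s m α p * X) :
    ∀ i j : Fin m,
      (∀ h : α i = α j,
        (Matrix.of fun x y : Fin (α i) × Fin s =>
            X ⟨i, x⟩ ⟨j, (Fin.cast h y.1, y.2)⟩) * genJordanBlockOne F s (α i) p =
          genJordanBlockOne F s (α i) p *
            (Matrix.of fun x y : Fin (α i) × Fin s =>
              X ⟨i, x⟩ ⟨j, (Fin.cast h y.1, y.2)⟩)) ∧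
      (∀ _hlt : α i < α j,
        ((∀ (x : Fin (α i) × Fin s) (y : Fin (α j) × Fin s),
            α i ≤ (y.1 : ℕ) → X ⟨i, x⟩ ⟨j, y⟩ = 0) ∧
          (Matrix.of fun x y : Fin (α i) × Fin s =>
              X ⟨i, x⟩ ⟨j, (⟨(y.1 : ℕ), by have := y.1.isLt; omega⟩, y.2)⟩) *
              genJordanBlockOne F s (α i) p =
            genJordanBlockOne F s (α i) p *
              (Matrix.of fun x y : Fin (α i) × Fin s =>
                X ⟨i, x⟩ ⟨j, (⟨(y.1 : ℕ), by have := y.1.isLt; omega⟩, y.2)⟩))) ∧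
      (∀ _hgt : α j < α i,
        ((∀ (x : Fin (α i) × Fin s) (y : Fin (α j) × Fin s),
            (x.1 : ℕ) < α i - α j → X ⟨i, x⟩ ⟨j, y⟩ = 0) ∧
          (Matrix.of fun x y : Fin (α j) × Fin s =>
              X ⟨i, (⟨α i - α j + (x.1 : ℕ), by have := x.1.isLt; omega⟩, x.2)⟩ ⟨j, y⟩) *
              genJordanBlockOne F s (α j) p =
            genJordanBlockOne F s (α j) p *
              (Matrix.of fun x y : Fin (α j) × Fin s =>
                X ⟨i, (⟨α i - α j + (x.1 : ℕ), by have := x.1.isLt; omega⟩, x.2)⟩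
                  ⟨j, y⟩))) := by
  subst hdeg
  intro i j
  set C := companionMat F p.natDegree p with hCdef
  have hD : ∀ Z W : Matrix (Fin p.natDegree) (Fin p.natDegree) F,
      C * Z = Z * C → Z = C * W - W * C → Z = 0 :=
    fun Z W h1 h2 => CentralizerAux.ker_inter_im p hmonic hirr hsep Z W h1 h2
  set Y : ℕ → ℕ → Matrix (Fin p.natDegree) (Fin p.natDegree) F := fun a b =>
    if h : a < α i ∧ b < α j then
      Matrix.of (fun u v => X ⟨i, (⟨a, h.1⟩, u)⟩ ⟨j, (⟨b, h.2⟩, v)⟩) else 0 with hYdef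
  have hYe : ∀ (a b : ℕ) (ha : a < α i) (hb : b < α j) (u v : Fin p.natDegree),
      Y a b u v = X ⟨i, (⟨a, ha⟩, u)⟩ ⟨j, (⟨b, hb⟩, v)⟩ := by
    intro a b ha hb u v
    show (if h : a < α i ∧ b < α j then
      Matrix.of (fun u v => X ⟨i, (⟨a, h.1⟩, u)⟩ ⟨j, (⟨b, h.2⟩, v)⟩) else 0) u v = _
    rw [dif_pos ⟨ha, hb⟩]
    rfl
  have hzero : ∀ a b, α i ≤ a ∨ α j ≤ b → Y a b = 0 := by
    intro a b h
    show (if h : a < α i ∧ b < α j then _ else 0) = 0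
    rw [dif_neg (by omega)]
  have hrel : ∀ a b, a < α i → b < α j →
      Y a b * C + Y a (b + 1) = C * Y a b + (if a = 0 then 0 else Y (a - 1) b) := by
    intro a b ha hb
    ext u v
    have hXe := Matrix.ext_iff.mpr hX ⟨i, (⟨a, ha⟩, u)⟩ ⟨j, (⟨b, hb⟩, v)⟩
    rw [CentralizerAux2.mulG_entry, CentralizerAux2.Gmul_entry] at hXe
    rw [Matrix.add_apply, Matrix.add_apply, Matrix.mul_apply, Matrix.mul_apply,
      apply_ite (fun M : Matrix (Fin p.natDegree) (Fin p.natDegree) F => M u v),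
      Matrix.zero_apply]
    rw [show (∑ w, Y a b u w * C w v)
        = ∑ w, X ⟨i, (⟨a, ha⟩, u)⟩ ⟨j, (⟨b, hb⟩, w)⟩ * C w v from
      Finset.sum_congr rfl fun w _ => by rw [hYe a b ha hb u w]]
    rw [show (∑ w, C u w * Y a b w v)
        = ∑ w, C u w * X ⟨i, (⟨a, ha⟩, w)⟩ ⟨j, (⟨b, hb⟩, v)⟩ from
      Finset.sum_congr rfl fun w _ => by rw [hYe a b ha hb w v]]
    rw [show Y a (b + 1) u v
        = (if h : b + 1 < α j then X ⟨i, (⟨a, ha⟩, u)⟩ ⟨j, (⟨b + 1, h⟩, v)⟩ else 0) from ?_]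
    rw [show (if a = 0 then (0:F) else Y (a - 1) b u v)
        = (if h : 0 < a then X ⟨i, (⟨a - 1, by omega⟩, u)⟩ ⟨j, (⟨b, hb⟩, v)⟩ else 0)
        from ?_]
    · exact hXe
    · by_cases ha0 : a = 0
      · rw [if_pos ha0, dif_neg (by omega)]
      · rw [if_neg ha0, dif_pos (by omega), hYe (a - 1) b (by omega) hb u v]
    · by_cases hb1 : b + 1 < α j
      · rw [dif_pos hb1, hYe a (b + 1) ha hb1 u v]
      · rw [dif_neg hb1, hzero a (b + 1) (Or.inr (by omega)), Matrix.zero_apply]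
  have hvan1 : ∀ a b, a < b → Y a b = 0 := chain_vanish C hD (α i) (α j) Y hzero hrel
  have hvan2 : ∀ a b, a + α j < b + α i → Y a b = 0 :=
    chain_vanish' C hD (α i) (α j) Y hzero hrel
  have main : ∀ (ℓ off : ℕ), off + ℓ = α i → ℓ ≤ α j →
      (∀ a b : ℕ, a < ℓ → ℓ ≤ b + 1 → Y (off + a) (b + 1) = 0) →
      (off ≠ 0 → ∀ b : ℕ, b < α j → Y (off - 1) b = 0) →
      ∀ Z : Matrix (Fin ℓ × Fin p.natDegree) (Fin ℓ × Fin p.natDegree) F,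
      (∀ (a b : Fin ℓ) (u v : Fin p.natDegree),
        Z (a, u) (b, v) = Y (off + ↑a) ↑b u v) →
      Z * genJordanBlockOne F p.natDegree ℓ p
        = genJordanBlockOne F p.natDegree ℓ p * Z := by
    intro ℓ off hoff hlj hcol hrow0 Z hZY
    ext x y
    obtain ⟨a, u⟩ := x
    obtain ⟨b, v⟩ := y
    rw [CentralizerAux2.mulB_entry, CentralizerAux2.Bmul_entry]
    have hA : off + (a : ℕ) < α i := by have := a.isLt; omega
    have hB : (b : ℕ) < α j := by have := b.isLt; omega
    have E := Matrix.ext_iff.mpr (hrel (off + ↑a) ↑b hA hB) u v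
    rw [Matrix.add_apply, Matrix.add_apply, Matrix.mul_apply, Matrix.mul_apply,
      apply_ite (fun M : Matrix (Fin p.natDegree) (Fin p.natDegree) F => M u v),
      Matrix.zero_apply] at E
    have E2 : (∑ w, Y (off + ↑a) ↑b u w * C w v)
        + (if _h : (b : ℕ) + 1 < ℓ then Y (off + ↑a) ((b : ℕ) + 1) u v else 0)
        = (∑ w, C u w * Y (off + ↑a) ↑b w v)
        + (if _h : 0 < (a : ℕ) then Y (off + ((a : ℕ) - 1)) ↑b u v else 0) := by
      have eR : (if off + (a : ℕ) = 0 then (0:F) else Y (off + ↑a - 1) ↑b u v)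
          = (if _h : 0 < (a : ℕ) then Y (off + ((a : ℕ) - 1)) ↑b u v else 0) := by
        by_cases ha0 : 0 < (a : ℕ)
        · rw [dif_pos ha0, if_neg (by omega : ¬ off + (a : ℕ) = 0),
            show off + (a : ℕ) - 1 = off + ((a : ℕ) - 1) from by omega]
        · rw [dif_neg ha0]
          by_cases h0 : off + (a : ℕ) = 0
          · rw [if_pos h0]
          · rw [if_neg h0, show off + (a : ℕ) - 1 = off - 1 from by omega,
              hrow0 (by omega) ↑b hB, Matrix.zero_apply]
      rw [eR] at E
      by_cases hb1 : (b : ℕ) + 1 < ℓ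
      · rw [dif_pos hb1]
        exact E
      · rw [dif_neg hb1]
        rw [hcol ↑a ↑b a.isLt (by omega), Matrix.zero_apply] at E
        exact E
    simp only [hZY]
    exact E2
  refine ⟨?_, ?_, ?_⟩
  · -- case α i = α j
    intro h
    refine main (α i) 0 (by omega) (by omega)
      (fun a b ha hb => hvan1 (0 + a) (b + 1) (by omega))
      (fun h0 => absurd rfl h0) _ ?_
    intro a b u v
    rw [hYe (0 + ↑a) ↑b (by omega) (by omega) u v]
    rw [show (⟨0 + (a : ℕ), by omega⟩ : Fin (α i)) = a from Fin.ext (Nat.zero_add _)]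
    rfl
  · -- case α i < α j
    intro hlt
    constructor
    · intro x y hy
      obtain ⟨a, u⟩ := x
      obtain ⟨b, v⟩ := y
      have hy2 : α i ≤ (b : ℕ) := hy
      have : X ⟨i, (a, u)⟩ ⟨j, (b, v)⟩ = Y ↑a ↑b u v := by
        rw [hYe ↑a ↑b a.isLt b.isLt u v]
      rw [this, hvan1 ↑a ↑b (by have := a.isLt; omega), Matrix.zero_apply]
    · refine main (α i) 0 (by omega) (by omega)
        (fun a b ha hb => hvan1 (0 + a) (b + 1) (by omega))
        (fun h0 => absurd rfl h0) _ ?_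
      intro a b u v
      rw [hYe (0 + ↑a) ↑b (by omega) (by omega) u v]
      rw [show (⟨0 + (a : ℕ), by omega⟩ : Fin (α i)) = a from Fin.ext (Nat.zero_add _)]
      rfl
  · -- case α j < α i
    intro hgt
    constructor
    · intro x y hx
      obtain ⟨a, u⟩ := x
      obtain ⟨b, v⟩ := y
      have hx2 : (a : ℕ) < α i - α j := hx
      have : X ⟨i, (a, u)⟩ ⟨j, (b, v)⟩ = Y ↑a ↑b u v := by
        rw [hYe ↑a ↑b a.isLt b.isLt u v]
      rw [this, hvan2 ↑a ↑b (by have := b.isLt; omega), Matrix.zero_apply]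
    · refine main (α j) (α i - α j) (by omega) (by omega)
        (fun a b ha hb => hzero (α i - α j + a) (b + 1) (Or.inr (by omega)))
        (fun h0 b hb => hvan2 (α i - α j - 1) b (by omega)) _ ?_
      intro a b u v
      rw [hYe (α i - α j + ↑a) ↑b (by have := a.isLt; omega) b.isLt u v]
      rfl
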